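/- Define s̄(m,n) = Σ_{z=0}^{min{m,n}} Σ_{y=0}^{min{m,n}−z} 4^{y+z}·C(m−y−z, y)·C(n−y−z, z). Then for all integers m, n ≥ 0, s̄(m+1, n) = s̄(m,n) + 4·s̄(m−1, n−1) + ε(m,n), where ε(m,n) = [n ≥ m+1]·4^{m+1}·C(n−m−1, m+1), with [·] the indicator and with s̄ of negative arguments set to 0. -/

import Mathlib

open Finset

/-- Binomial coefficient on the integers, with `C a b = 0` unless `0 ≤ b ≤ a`. -/
def C (a b : ℤ) : ℚ := if 0 ≤ b ∧ b ≤ a then (Nat.choose a.toNat b.toNat : ℚ) else 0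

/-- `s̄(m,n) = Σ_{z=0}^{min{m,n}} Σ_{y=0}^{min{m,n}−z} 4^{y+z}·C(m−y−z, y)·C(n−y−z, z)`,
set to `0` when `m < 0` or `n < 0`. -/
noncomputable def sbar (m n : ℤ) : ℚ :=
  if m < 0 ∨ n < 0 then 0
  else ∑ z ∈ Finset.Icc 0 (min m n), ∑ y ∈ Finset.Icc 0 (min m n - z),
    (4 : ℚ) ^ (y + z) * C (m - y - z) y * C (n - y - z) z

lemma C_eq_zero {a b : ℤ} (h : ¬ (0 ≤ b ∧ b ≤ a)) : C a b = 0 := if_neg h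

lemma pascal {a : ℤ} (b : ℤ) (ha : a ≠ -1) : C (a+1) b = C a b + C a (b-1) := by
  unfold C
  split_ifs with h1 h2 h3 h2 h3 h3 h3
  all_goals try (exfalso; omega)
  all_goals norm_num
  · rw [show (a+1).toNat = a.toNat + 1 by omega, show b.toNat = (b.toNat - 1) + 1 by omega,
      Nat.choose_succ_succ]
    simp only [Nat.add_sub_cancel]
    push_cast
    ring
  · have hb : b = 0 := by omega
    subst hb
    simp
  · rw [show (a+1).toNat = b.toNat by omega, show a.toNat = b.toNat - 1 by omega]
    simp [Nat.choose_self]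

lemma sbar_eq (m n N : ℤ) (hm : 0 ≤ m) (hn : 0 ≤ n) (hN : min m n ≤ N) :
    sbar m n = ∑ z ∈ Icc (0:ℤ) N, ∑ y ∈ Icc (0:ℤ) N,
      (4 : ℚ) ^ (y + z) * C (m - y - z) y * C (n - y - z) z := by
  rw [sbar, if_neg (by omega)]
  have inner : ∀ z ∈ Icc (0:ℤ) (min m n),
      ∑ y ∈ Icc (0:ℤ) (min m n - z), (4:ℚ)^(y+z) * C (m-y-z) y * C (n-y-z) z
      = ∑ y ∈ Icc (0:ℤ) N, (4:ℚ)^(y+z) * C (m-y-z) y * C (n-y-z) z := by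
    intro z hz
    simp only [mem_Icc] at hz
    apply Finset.sum_subset (Finset.Icc_subset_Icc_right (by omega))
    intro y hy hy'
    simp only [mem_Icc, not_and, not_le] at hy hy'
    by_cases hmy : m < y + z
    · rw [C_eq_zero (a := m - y - z) (by omega)]; ring
    · rw [C_eq_zero (a := n - y - z) (b := z) (by omega)]; ring
  rw [Finset.sum_congr rfl inner]
  apply Finset.sum_subset (Finset.Icc_subset_Icc_right (by omega))
  intro z hz hz'
  apply Finset.sum_eq_zero
  intro y hy
  simp only [mem_Icc, not_and, not_le] at hz hz' hy
  by_cases h : m < z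
  · rw [C_eq_zero (a := m - y - z) (b := y) (by omega)]; ring
  · rw [C_eq_zero (a := n - y - z) (b := z) (by omega)]; ring

lemma shift_sum (m n N : ℤ) (hm : 0 ≤ m) (hn : 0 ≤ n) (hN : m + n ≤ N) :
    ∑ z ∈ Icc (0:ℤ) N, ∑ y ∈ Icc (0:ℤ) N,
      (4:ℚ)^(y+z) * C (m-y-z) (y-1) * C (n-y-z) z = 4 * sbar (m-1) (n-1) := by
  by_cases h0 : m = 0 ∨ n = 0
  · rw [sbar, if_pos (by omega), mul_zero]
    apply Finset.sum_eq_zero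
    intro z hz
    apply Finset.sum_eq_zero
    intro y hy
    simp only [mem_Icc] at hz hy
    by_cases hy1 : y ≤ 0
    · rw [C_eq_zero (a := m - y - z) (b := y - 1) (by omega)]; ring
    · rcases h0 with h0 | h0
      · rw [C_eq_zero (a := m - y - z) (b := y - 1) (by omega)]; ring
      · rw [C_eq_zero (a := n - y - z) (b := z) (by omega)]; ring
  · push_neg at h0
    have hm1 : 1 ≤ m := by omega
    have hn1 : 1 ≤ n := by omega
    rw [sbar_eq (m-1) (n-1) (N-1) (by omega) (by omega) (by omega), Finset.mul_sum]
    have hside : ∀ z ∈ Icc (0:ℤ) N, z ∉ Icc (0:ℤ) (N-1) →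
        ∑ y ∈ Icc (0:ℤ) N, (4:ℚ)^(y+z) * C (m-y-z) (y-1) * C (n-y-z) z = 0 := by
      intro z hz hz'
      simp only [mem_Icc, not_and, not_le] at hz hz'
      apply Finset.sum_eq_zero
      intro y hy
      simp only [mem_Icc] at hy
      rw [C_eq_zero (a := n - y - z) (b := z) (by omega)]; ring
    rw [← Finset.sum_subset (Finset.Icc_subset_Icc_right (by omega : N - 1 ≤ N)) hside]
    apply Finset.sum_congr rfl
    intro z hz
    simp only [mem_Icc] at hz
    rw [show Icc (0:ℤ) N = insert 0 (Icc 1 N) by ext x; simp [mem_Icc]; omega,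
      Finset.sum_insert (by simp)]
    rw [C_eq_zero (a := m - 0 - z) (b := 0 - 1) (by omega)]
    rw [show Icc (1:ℤ) N = (Icc (0:ℤ) (N-1)).map (addRightEmbedding 1) by
      rw [Finset.map_add_right_Icc]; norm_num]
    rw [Finset.sum_map, Finset.mul_sum]
    simp only [addRightEmbedding_apply]
    rw [mul_zero, zero_mul, zero_add]
    apply Finset.sum_congr rfl
    intro y hy
    rw [show y + 1 + z = (y + z) + 1 by ring,
      zpow_add_one₀ (by norm_num : (4:ℚ) ≠ 0),
      show m - (y+1) - z = m - 1 - y - z by ring,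
      show y + 1 - 1 = y by ring,
      show n - (y+1) - z = n - 1 - y - z by ring]
    ring

theorem sbar_recurrence_m (m n : ℤ) (hm : 0 ≤ m) (hn : 0 ≤ n) :
    sbar (m + 1) n = sbar m n + 4 * sbar (m - 1) (n - 1) +
      (if m + 1 ≤ n then (4 : ℚ) ^ (m + 1) * C (n - m - 1) (m + 1) else 0) := by
  set N : ℤ := m + n + 2 with hNdef
  have key : ∀ y z : ℤ, 0 ≤ y → 0 ≤ z →
      (4:ℚ)^(y+z) * C (m+1-y-z) y * C (n-y-z) z
      = (4:ℚ)^(y+z) * C (m-y-z) y * C (n-y-z) z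
        + (4:ℚ)^(y+z) * C (m-y-z) (y-1) * C (n-y-z) z
        + (if y = 0 ∧ z = m+1 then (4:ℚ)^(m+1) * C (n-m-1) (m+1) else 0) := by
    intro y z hy hz
    by_cases hcase : m - y - z = -1
    · by_cases hy0 : y = 0
      · subst hy0
        have hz1 : z = m + 1 := by omega
        subst hz1
        rw [if_pos ⟨rfl, rfl⟩]
        rw [C_eq_zero (a := m - 0 - (m+1)) (b := (0:ℤ)) (by omega)]
        rw [C_eq_zero (a := m - 0 - (m+1)) (b := (0:ℤ)-1) (by omega)]
        rw [show m + 1 - 0 - (m+1) = (0:ℤ) by ring]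
        rw [show C 0 0 = 1 by simp [C]]
        rw [show n - 0 - (m+1) = n - m - 1 by ring,
          show (0:ℤ) + (m+1) = m + 1 by ring]
        ring
      · rw [if_neg (by tauto)]
        rw [show m + 1 - y - z = (0:ℤ) by omega]
        rw [C_eq_zero (a := (0:ℤ)) (b := y) (by omega)]
        rw [C_eq_zero (a := m - y - z) (b := y) (by omega)]
        rw [C_eq_zero (a := m - y - z) (b := y - 1) (by omega)]
        ring
    · rw [if_neg (by omega)]
      rw [show m + 1 - y - z = (m - y - z) + 1 by ring, pascal y hcase]
      ring
  rw [sbar_eq (m+1) n N (by omega) hn (by omega),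
    sbar_eq m n N hm hn (by omega),
    ← shift_sum m n N hm hn (by omega)]
  have eps : (if m + 1 ≤ n then (4:ℚ)^(m+1) * C (n-m-1) (m+1) else 0)
      = ∑ z ∈ Icc (0:ℤ) N, ∑ y ∈ Icc (0:ℤ) N,
        (if y = 0 ∧ z = m+1 then (4:ℚ)^(m+1) * C (n-m-1) (m+1) else 0) := by
    have inner : ∀ z ∈ Icc (0:ℤ) N,
        (∑ y ∈ Icc (0:ℤ) N, (if y = 0 ∧ z = m+1 then (4:ℚ)^(m+1) * C (n-m-1) (m+1) else 0))
        = (if z = m+1 then (4:ℚ)^(m+1) * C (n-m-1) (m+1) else 0) := by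
      intro z _
      by_cases hz : z = m + 1
      · subst hz
        simp only [eq_self_iff_true, and_true, if_true]
        rw [Finset.sum_ite_eq' (Icc (0:ℤ) N) 0 (fun _ => (4:ℚ)^(m+1) * C (n-m-1) (m+1))]
        rw [if_pos (show (0:ℤ) ∈ Icc (0:ℤ) N by simp only [mem_Icc]; omega)]
      · rw [if_neg hz]
        apply Finset.sum_eq_zero
        intro y _
        rw [if_neg (by tauto)]
    rw [Finset.sum_congr rfl inner]
    rw [Finset.sum_ite_eq' (Icc (0:ℤ) N) (m+1) (fun _ => (4:ℚ)^(m+1) * C (n-m-1) (m+1))]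
    rw [if_pos (show m + 1 ∈ Icc (0:ℤ) N by simp only [mem_Icc]; omega)]
    by_cases h : m + 1 ≤ n
    · rw [if_pos h]
    · rw [if_neg h, C_eq_zero (a := n - m - 1) (b := m+1) (by omega)]
      ring
  rw [eps, ← Finset.sum_add_distrib, ← Finset.sum_add_distrib]
  apply Finset.sum_congr rfl
  intro z hz
  rw [← Finset.sum_add_distrib, ← Finset.sum_add_distrib]
  apply Finset.sum_congr rfl
  intro y hy
  simp only [mem_Icc] at hy hz
  exact key y z hy.1 hz.1
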